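/- arXiv:1607.02370 — 3 statements merged into one kernel-verified Lean document; each statement's English description precedes it below -/
import Mathlib

section
/- Let u ∈ ℤ_p be rational with φ_{p,q}(u) not rational (so that there are infinitely many indices i with p ∤ u_i and ψ is well defined). Then limsup_{n→∞} (p^{ψ(n+1)}·|u_{ψ(n+1)}|_∞)^{1/n} = q; that is, the real power series S_u(T) = Σ_{n=0}^∞ p^{ψ(n+1)}·u_{ψ(n+1)}·T^n has radius of convergence 1/q for the archimedean metric. -/
open scoped Classical

open Filter Real Topology

/-- `ε₀(u)`: the unique integer in `{0, …, p−1}` congruent to `u` modulo `p`. -/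
noncomputable def eps0 {p : ℕ} [Fact p.Prime] (u : ℤ_[p]) : ℕ := (PadicInt.toZMod u).val

/-- `φ_{p,q}(u) = Σ ε₀(-q·g^n(u)) p^n`, for a given iteration map `g`. -/
noncomputable def phi (p q : ℕ) [Fact p.Prime] (g : ℤ_[p] → ℤ_[p]) (u : ℤ_[p]) : ℤ_[p] :=
  ∑' n : ℕ, (eps0 (-((q : ℤ_[p]) * g^[n] u)) : ℤ_[p]) * (p : ℤ_[p]) ^ n

lemma aux_ratio_root {c : ℕ → ℝ} {q : ℝ} (hq : 0 < q) (hc : ∀ n, c n ≠ 0)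
    (h : Tendsto (fun n => |c (n + 1)| / |c n|) atTop (𝓝 q)) :
    Tendsto (fun n : ℕ => |c n| ^ ((n : ℝ)⁻¹)) atTop (𝓝 q) := by
  have habs : ∀ n, 0 < |c n| := fun n => abs_pos.2 (hc n)
  have hlog : Tendsto (fun n => Real.log (|c (n + 1)| / |c n|)) atTop (𝓝 (Real.log q)) :=
    h.log hq.ne'
  have hces := hlog.cesaro
  have hsum : ∀ n : ℕ, ∑ i ∈ Finset.range n, Real.log (|c (i + 1)| / |c i|)
      = Real.log (|c n|) - Real.log (|c 0|) := by
    intro n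
    have : ∀ i, Real.log (|c (i + 1)| / |c i|)
        = Real.log (|c (i + 1)|) - Real.log (|c i|) := fun i =>
      Real.log_div (habs _).ne' (habs _).ne'
    simp only [this]
    exact Finset.sum_range_sub (fun k => Real.log (|c k|)) n
  simp only [hsum] at hces
  have h0 : Tendsto (fun n : ℕ => (n : ℝ)⁻¹ * Real.log (|c 0|)) atTop (𝓝 0) := by
    have h1 : Tendsto (fun n : ℕ => ((n : ℝ))⁻¹) atTop (𝓝 0) :=
      tendsto_inv_atTop_zero.comp tendsto_natCast_atTop_atTop
    have h2 := h1.mul_const (Real.log (|c 0|))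
    rwa [zero_mul] at h2
  have hmain : Tendsto (fun n : ℕ => (n : ℝ)⁻¹ * Real.log (|c n|)) atTop (𝓝 (Real.log q)) := by
    have := hces.add h0
    simp only [mul_sub, add_zero] at this ⊢
    convert this using 2 with n
    ring
  have : Tendsto (fun n : ℕ => Real.exp ((n : ℝ)⁻¹ * Real.log (|c n|))) atTop
      (𝓝 (Real.exp (Real.log q))) := (Real.continuous_exp.tendsto _).comp hmain
  rw [Real.exp_log hq] at this
  refine this.congr fun n => ?_
  rw [Real.rpow_def_of_pos (habs n), mul_comm]


lemma aux_summable_padic (p : ℕ) [Fact p.Prime] (f : ℕ → ℚ_[p])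
    (hf : ∀ n, ‖f n‖ ≤ ((p : ℝ))⁻¹ ^ n) : Summable f := by
  have hp1 : (1 : ℝ) < p := Nat.one_lt_cast.2 (Fact.out : p.Prime).one_lt
  refine Summable.of_norm_bounded (summable_geometric_of_lt_one ?_ ?_) hf
  · positivity
  · rw [inv_lt_one_iff₀]; right; exact hp1

lemma aux_periodic_tsum_rat (p : ℕ) [Fact p.Prime] (e : ℕ → ℕ) (N T : ℕ) (hT : 0 < T)
    (hper : ∀ t : ℕ, e (N + t + T) = e (N + t)) :
    ∃ r : ℚ, ∑' n : ℕ, ((e n : ℚ_[p]) * (p : ℚ_[p]) ^ n) = (r : ℚ_[p]) := by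
  haveI : NeZero T := ⟨hT.ne'⟩
  have hp1 : (1 : ℝ) < p := Nat.one_lt_cast.2 (Fact.out : p.Prime).one_lt
  set f : ℕ → ℚ_[p] := fun n => (e n : ℚ_[p]) * (p : ℚ_[p]) ^ n with hf
  have hnorm : ∀ n, ‖f n‖ ≤ ((p : ℝ))⁻¹ ^ n := by
    intro n
    rw [hf]
    calc ‖(e n : ℚ_[p]) * (p : ℚ_[p]) ^ n‖ = ‖(e n : ℚ_[p])‖ * ‖(p : ℚ_[p]) ^ n‖ := norm_mul _ _
      _ ≤ 1 * ‖(p : ℚ_[p]) ^ n‖ := by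
          refine mul_le_mul_of_nonneg_right ?_ (norm_nonneg _)
          exact_mod_cast Padic.norm_int_le_one (e n : ℤ)
      _ = ((p : ℝ))⁻¹ ^ n := by
          rw [one_mul, norm_pow, Padic.norm_p]
  have hsum : Summable f := aux_summable_padic p f hnorm
  have hsplit := (Summable.sum_add_tsum_nat_add N hsum).symm
  set g : ℕ → ℚ_[p] := fun t => f (N + t) with hg
  have hsumg : Summable g := by
    have := (summable_nat_add_iff N).2 hsum
    exact this.congr fun t => by simp [hg, add_comm]
  have heper : ∀ b a : ℕ, e (N + (b + a * T)) = e (N + b) := by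
    intro b a
    induction a with
    | zero => simp
    | succ a ih =>
      rw [show N + (b + (a + 1) * T) = N + (b + a * T) + T by ring, hper, ih]
  have hgp : ∀ b a : ℕ, g (b + a * T) = g b * ((p : ℚ_[p]) ^ T) ^ a := by
    intro b a
    show f (N + (b + a * T)) = f (N + b) * _
    simp only [hf, heper b a]
    rw [show N + (b + a * T) = (N + b) + a * T by ring, pow_add, mul_comm a T, pow_mul,
      mul_assoc]
  have hre : ∑' t : ℕ, g t = ∑' x : ℕ × Fin T, g (x.1 * T + (x.2 : ℕ)) := by
    rw [← ((Nat.divModEquiv T).symm.tsum_eq g)]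
    rfl
  have hsumF : Summable (fun x : ℕ × Fin T => g (x.1 * T + (x.2 : ℕ))) := by
    rw [← Equiv.summable_iff (Nat.divModEquiv T).symm] at hsumg
    exact hsumg.congr fun x => rfl
  have hprod : ∑' x : ℕ × Fin T, g (x.1 * T + (x.2 : ℕ))
      = ∑' a : ℕ, ∑ b : Fin T, g (a * T + (b : ℕ)) := by
    rw [Summable.tsum_prod' hsumF (fun b => Summable.of_finite)]
    exact tsum_congr fun a => tsum_fintype _
  have hgeo : ‖(p : ℚ_[p]) ^ T‖ < 1 := by
    rw [norm_pow, Padic.norm_p]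
    exact pow_lt_one₀ (by positivity) (by rw [inv_lt_one_iff₀]; right; exact hp1) hT.ne'
  have htail : ∑' t : ℕ, g t = (∑ b : Fin T, g (b : ℕ)) * (1 - (p : ℚ_[p]) ^ T)⁻¹ := by
    rw [hre, hprod]
    have hrow : ∀ a : ℕ, ∑ b : Fin T, g (a * T + (b : ℕ))
        = ((p : ℚ_[p]) ^ T) ^ a * (∑ b : Fin T, g (b : ℕ)) := by
      intro a
      rw [Finset.mul_sum]
      refine Finset.sum_congr rfl fun b _ => ?_
      rw [show a * T + (b : ℕ) = (b : ℕ) + a * T by ring, hgp, mul_comm]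
    simp only [hrow]
    rw [tsum_mul_right, tsum_geometric_of_norm_lt_one hgeo, mul_comm]
  refine ⟨(∑ i ∈ Finset.range N, (e i : ℚ) * (p : ℚ) ^ i)
    + (∑ b ∈ Finset.range T, (e (N + b) : ℚ) * (p : ℚ) ^ (N + b)) * (1 - (p : ℚ) ^ T)⁻¹, ?_⟩
  rw [hsplit]
  have h1 : ∑' t : ℕ, f (t + N) = ∑' t : ℕ, g t :=
    tsum_congr fun t => by simp [hg, add_comm]
  rw [h1, htail]
  have h2 : ∑ b : Fin T, g (b : ℕ) = ∑ b ∈ Finset.range T, f (N + b) :=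
    Fin.sum_univ_eq_sum_range (fun b => f (N + b)) T
  rw [h2]
  push_cast
  simp only [hf]


/-- Let `u ∈ ℤ_p` be rational (with `v n ∈ ℚ` equal to the iterate `g^n(u)`), `φ_{p,q}(u)` not
rational, and `ψ` the enumeration of the indices `i` with `p ∤ u_i`. Then
`limsup (p^{ψ(n+1)}|u_{ψ(n+1)}|_∞)^{1/n} = q`, i.e. the real power series
`S_u(T) = Σ p^{ψ(n+1)} u_{ψ(n+1)} T^n` has radius of convergence `1/q`. -/
theorem stmt17 (p q : ℕ) [Fact p.Prime] (hq : 0 < q) (hpq : Nat.Coprime p q)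
    (g : ℤ_[p] → ℤ_[p])
    (hg : ∀ u : ℤ_[p], (p : ℤ_[p]) * g u =
      if (p : ℤ_[p]) ∣ u then u
      else (q : ℤ_[p]) * u + (eps0 (-((q : ℤ_[p]) * u)) : ℤ_[p]))
    (u : ℤ_[p]) (v : ℕ → ℚ)
    (hv : ∀ n : ℕ, ((v n : ℚ) : ℚ_[p]) = ((g^[n] u : ℤ_[p]) : ℚ_[p]))
    (hirr : ((phi p q g u : ℤ_[p]) : ℚ_[p]) ∉ Set.range ((↑) : ℚ → ℚ_[p]))
    (ψ : ℕ → ℕ) (hψmono : StrictMono ψ)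
    (hψmem : ∀ n, ¬ (p : ℤ_[p]) ∣ g^[ψ n] u)
    (hψall : ∀ i, ¬ (p : ℤ_[p]) ∣ g^[i] u → ∃ n, ψ n = i) :
    Filter.limsup
      (fun n : ℕ =>
        ((p : ℝ) ^ ψ (n + 1) * |((v (ψ (n + 1)) : ℚ) : ℝ)|) ^ ((n : ℝ)⁻¹))
      Filter.atTop = (q : ℝ) ∧
    (FormalMultilinearSeries.ofScalars ℝ
        (fun n : ℕ => (p : ℝ) ^ ψ (n + 1) * ((v (ψ (n + 1)) : ℚ) : ℝ))).radius
      = ((q : ENNReal))⁻¹ := by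
  have hp : p.Prime := Fact.out
  haveI : NeZero p := ⟨hp.ne_zero⟩
  have hp2 : 2 ≤ p := hp.two_le
  -- the iterates
  set U : ℕ → ℤ_[p] := fun n => g^[n] u with hU
  set e : ℕ → ℕ := fun n => eps0 (-((q : ℤ_[p]) * U n)) with he
  set P : ℕ → Prop := fun n => (p : ℤ_[p]) ∣ U n with hP
  have hψmem' : ∀ n, ¬ P (ψ n) := hψmem
  have hψall' : ∀ i, ¬ P i → ∃ n, ψ n = i := hψall
  have hv' : ∀ n, ((v n : ℚ) : ℚ_[p]) = (U n : ℚ_[p]) := hv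
  have hrec : ∀ n, (p : ℤ_[p]) * U (n + 1) =
      if P n then U n else (q : ℤ_[p]) * U n + (e n : ℤ_[p]) := by
    intro n
    have h1 : U (n + 1) = g (U n) := Function.iterate_succ_apply' g n u
    rw [h1]
    exact hg (U n)
  -- pass to ℚ
  have hQrec : ∀ n, (p : ℚ) * v (n + 1) = if P n then v n else (q : ℚ) * v n + (e n : ℚ) := by
    intro n
    apply Rat.cast_injective (α := ℚ_[p])
    have h2 := congrArg ((↑) : ℤ_[p] → ℚ_[p]) (hrec n)
    by_cases hPn : P n
    · rw [if_pos hPn] at h2 ⊢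
      push_cast at h2 ⊢
      rw [hv', hv']
      exact h2
    · rw [if_neg hPn] at h2 ⊢
      push_cast at h2 ⊢
      rw [hv', hv']
      exact h2
  -- denominators
  set d : ℕ := (v 0).den with hd
  have hdpos : 0 < d := (v 0).pos
  have hdQ : (d : ℚ) ≠ 0 := by positivity
  have hdvd_int : ∀ z : ℤ, ((p : ℤ_[p]) ∣ (z : ℤ_[p])) ↔ ((p : ℤ) ∣ z) := by
    intro z
    rw [← PadicInt.norm_int_lt_one_iff_dvd, ← PadicInt.norm_lt_one_iff_dvd]
  have hToZp : ∀ (n : ℕ) (z : ℤ), v n * (d : ℚ) = (z : ℚ) → U n * (d : ℤ_[p]) = (z : ℤ_[p]) := by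
    intro n z hzq
    apply Subtype.coe_injective
    push_cast
    rw [← hv' n]
    exact_mod_cast congrArg (fun r : ℚ => (r : ℚ_[p])) hzq
  have hU0 : U 0 = u := rfl
  have hpd : ¬ ((p : ℤ) ∣ (d : ℤ)) := by
    intro hdvd
    have h0 : v 0 * (d : ℚ) = ((v 0).num : ℚ) := by exact_mod_cast Rat.mul_den_eq_num (v 0)
    have h1 := hToZp 0 (v 0).num h0
    have h2 : (p : ℤ_[p]) ∣ ((v 0).num : ℤ_[p]) := by
      rw [← h1]
      exact Dvd.dvd.mul_left (by exact_mod_cast (hdvd_int d).2 hdvd) _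
    have h3 : (p : ℤ) ∣ (v 0).num := (hdvd_int _).1 h2
    have h4 : p ∣ (v 0).num.natAbs := by
      have := Int.natAbs_dvd_natAbs.mpr h3
      simpa using this
    have h5 : p ∣ d := Int.ofNat_dvd.mp hdvd
    have := Nat.dvd_gcd h4 h5
    rw [(v 0).reduced] at this
    exact Nat.Prime.one_lt hp |>.ne' (Nat.dvd_one.mp this)
  -- the integer sequence
  have hzex : ∀ n, ∃ z : ℤ, v n * (d : ℚ) = (z : ℚ) := by
    intro n
    induction n with
    | zero => exact ⟨(v 0).num, by exact_mod_cast Rat.mul_den_eq_num (v 0)⟩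
    | succ n ih =>
      obtain ⟨zn, hzn⟩ := ih
      have hpQ : (p : ℚ) ≠ 0 := by positivity
      by_cases hPn : P n
      · have h1 : (p : ℚ) * (v (n + 1) * d) = (zn : ℚ) := by
          rw [← mul_assoc, hQrec n, if_pos hPn, hzn]
        have h2 : (p : ℤ_[p]) ∣ (zn : ℤ_[p]) := by
          rw [← hToZp n zn hzn]
          exact hPn.mul_right _
        obtain ⟨z', hz'⟩ := (hdvd_int zn).1 h2
        refine ⟨z', ?_⟩
        apply mul_left_cancel₀ hpQ
        rw [h1, hz']
        push_cast
        ring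
      · have h1 : (p : ℚ) * (v (n + 1) * d) = ((q * zn + (e n : ℤ) * d : ℤ) : ℚ) := by
          have hh : ((q : ℚ) * v n + (e n : ℚ)) * d = (q : ℚ) * (v n * d) + (e n : ℚ) * d := by
            ring
          rw [← mul_assoc, hQrec n, if_neg hPn, hh, hzn]
          push_cast
          ring
        have h2 : (p : ℤ_[p]) ∣ ((q * zn + (e n : ℤ) * d : ℤ) : ℤ_[p]) := by
          have hz := hToZp n zn hzn
          push_cast
          rw [← hz]
          have hh : (q : ℤ_[p]) * (U n * (d : ℤ_[p])) + (e n : ℤ_[p]) * d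
              = ((p : ℤ_[p]) * U (n + 1)) * d := by
            rw [hrec n, if_neg hPn]
            ring
          rw [hh]
          exact dvd_mul_of_dvd_left (dvd_mul_right _ _) _
        obtain ⟨z', hz'⟩ := (hdvd_int _).1 h2
        refine ⟨z', ?_⟩
        apply mul_left_cancel₀ hpQ
        rw [h1, hz']
        push_cast
        ring
  choose z hzs using hzex
  have hzint : ∀ n, (z n : ℤ_[p]) = U n * (d : ℤ_[p]) := fun n => (hToZp n (z n) (hzs n)).symm
  have hPz : ∀ n, P n ↔ (p : ℤ) ∣ z n := by
    intro n
    constructor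
    · intro hPn
      have h2 : (p : ℤ_[p]) ∣ (z n : ℤ_[p]) := by
        rw [hzint n]
        exact hPn.mul_right _
      exact (hdvd_int _).1 h2
    · intro hzd
      have h2 : (p : ℤ_[p]) ∣ U n * (d : ℤ_[p]) := by
        rw [← hzint n]
        exact (hdvd_int _).2 hzd
      rcases (PadicInt.prime_p.dvd_mul).1 h2 with h | h
      · exact h
      · exfalso
        apply hpd
        have h3 : (p : ℤ_[p]) ∣ ((d : ℤ) : ℤ_[p]) := by exact_mod_cast h
        exact (hdvd_int _).1 h3
  have hzrec1 : ∀ n, P n → (p : ℤ) * z (n + 1) = z n := by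
    intro n hPn
    have h1 := hQrec n
    rw [if_pos hPn] at h1
    have h2 : (p : ℚ) * (v (n + 1) * d) = v n * d := by rw [← mul_assoc, h1]
    rw [hzs, hzs] at h2
    exact_mod_cast h2
  have hzrec2 : ∀ n, ¬ P n → (p : ℤ) * z (n + 1) = q * z n + (e n : ℤ) * d := by
    intro n hPn
    have h1 := hQrec n
    rw [if_neg hPn] at h1
    have h2 : (p : ℚ) * (v (n + 1) * d) = (q : ℚ) * (v n * d) + (e n : ℚ) * d := by
      rw [← mul_assoc, h1]; ring
    rw [hzs, hzs] at h2
    exact_mod_cast h2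
  have hzne : ∀ n, z n ≠ 0 := by
    intro n h0
    have hUn : U n = 0 := by
      have h1 : (z n : ℤ_[p]) = 0 := by rw [h0]; exact Int.cast_zero
      rw [hzint n] at h1
      have hd0 : (d : ℤ_[p]) ≠ 0 := Nat.cast_ne_zero.2 hdpos.ne'
      exact (mul_eq_zero.1 h1).resolve_right hd0
    have hprop : ∀ t, U (n + t) = 0 := by
      intro t
      induction t with
      | zero => simpa using hUn
      | succ t ih =>
        have hPt : P (n + t) := by
          show (p : ℤ_[p]) ∣ U (n + t)
          rw [ih]
          exact dvd_zero _
        have h := hrec (n + t)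
        rw [if_pos hPt, ih] at h
        have h2 : U (n + t + 1) = 0 := by
          rcases mul_eq_zero.1 h with h' | h'
          · exact absurd h' PadicInt.prime_p.ne_zero
          · exact h'
        exact h2
    apply hψmem' n
    have hge : n ≤ ψ n := hψmono.le_apply
    show (p : ℤ_[p]) ∣ U (ψ n)
    have h3 := hprop (ψ n - n)
    rw [Nat.add_sub_cancel' hge] at h3
    rw [h3]
    exact dvd_zero _
  -- epsilon bounds
  have he_lt : ∀ n, e n < p := fun n => ZMod.val_lt _
  have he_pos : ∀ m, 1 ≤ e (ψ m) := by
    intro m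
    by_contra hlt
    push_neg at hlt
    have h0 : e (ψ m) = 0 := by omega
    have h1 : (PadicInt.toZMod (-((q : ℤ_[p]) * U (ψ m)))) = 0 :=
      (ZMod.val_eq_zero _).mp h0
    have h3 : -((q : ℤ_[p]) * U (ψ m)) ∈ RingHom.ker (PadicInt.toZMod (p := p)) := h1
    rw [PadicInt.ker_toZMod, PadicInt.maximalIdeal_eq_span_p,
      Ideal.mem_span_singleton] at h3
    rw [dvd_neg] at h3
    rcases PadicInt.prime_p.dvd_mul.1 h3 with h | h
    · have h4 : (p : ℤ) ∣ (q : ℤ) := (hdvd_int _).1 (by exact_mod_cast h)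
      have h5 : p ∣ q := Int.ofNat_dvd.mp h4
      have h6 := Nat.dvd_gcd (dvd_refl p) h5
      rw [Nat.Coprime.gcd_eq_one hpq] at h6
      have := Nat.dvd_one.mp h6
      omega
    · exact hψmem' m h
  -- key integer sequence B i = z i * p ^ i and its recurrence along ψ
  set B : ℕ → ℤ := fun i => z i * (p : ℤ) ^ i with hB
  have hbetween : ∀ m i, ψ m < i → i < ψ (m + 1) → P i := by
    intro m i h1 h2
    by_contra hPi
    obtain ⟨k, hk⟩ := hψall' i hPi
    rw [← hk] at h1 h2
    have hk1 : m < k := hψmono.lt_iff_lt.1 h1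
    have hk2 : k < m + 1 := hψmono.lt_iff_lt.1 h2
    omega
  have hBstep : ∀ i, P i → B (i + 1) = B i := by
    intro i hPi
    show z (i + 1) * (p : ℤ) ^ (i + 1) = z i * (p : ℤ) ^ i
    rw [pow_succ, show z (i + 1) * ((p : ℤ) ^ i * p) = ((p : ℤ) * z (i + 1)) * (p : ℤ) ^ i by ring,
      hzrec1 i hPi]
  have hgap : ∀ m t, ψ m + 1 + t ≤ ψ (m + 1) → B (ψ m + 1 + t) = B (ψ m + 1) := by
    intro m t
    induction t with
    | zero => intro _; rfl
    | succ t ih =>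
      intro hle
      have harith : ψ m + 1 + (t + 1) = (ψ m + 1 + t) + 1 := by omega
      rw [harith, hBstep _ (hbetween m _ (by omega) (by omega))]
      exact ih (by omega)
  have hArec : ∀ m, B (ψ (m + 1)) = q * B (ψ m) + (e (ψ m) : ℤ) * d * (p : ℤ) ^ (ψ m) := by
    intro m
    have hlt : ψ m < ψ (m + 1) := hψmono (Nat.lt_succ_self m)
    have h1 : B (ψ (m + 1)) = B (ψ m + 1) := by
      have harith : ψ (m + 1) = ψ m + 1 + (ψ (m + 1) - (ψ m + 1)) := by omega
      rw [harith]
      exact hgap m _ (by omega)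
    rw [h1]
    show z (ψ m + 1) * (p : ℤ) ^ (ψ m + 1) = _
    rw [pow_succ,
      show z (ψ m + 1) * ((p : ℤ) ^ (ψ m) * p) = ((p : ℤ) * z (ψ m + 1)) * (p : ℤ) ^ (ψ m) by ring,
      hzrec2 (ψ m) (hψmem' m)]
    ring
  -- dichotomy : |z (ψ m)| → ∞
  have hXtop : Tendsto (fun m => (z (ψ m)).natAbs) atTop atTop := by
    by_contra hnot
    rw [tendsto_atTop_atTop] at hnot
    push_neg at hnot
    obtain ⟨C, hC⟩ := hnot
    have hSinf : {m | (z (ψ m)).natAbs < C}.Infinite := by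
      apply Set.infinite_of_forall_exists_gt
      intro a
      obtain ⟨b, hab, hbC⟩ := hC (a + 1)
      exact ⟨b, hbC, by omega⟩
    have hfin : (Set.Icc (-(C : ℤ)) (C : ℤ)).Finite := Set.finite_Icc _ _
    have hmaps : Set.MapsTo (fun m => z (ψ m)) {m | (z (ψ m)).natAbs < C}
        (Set.Icc (-(C : ℤ)) C) := by
      intro m hm
      simp only [Set.mem_setOf_eq] at hm
      simp only [Set.mem_Icc]
      omega
    obtain ⟨m1, _, m2, _, hne, heqz⟩ := hSinf.exists_ne_map_eq_of_mapsTo hmaps hfin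
    have hkey : ∀ a b : ℕ, a < b → z (ψ a) = z (ψ b) → False := by
      intro a b hab hzeq
      have hUeq : U (ψ a) = U (ψ b) := by
        have h1 : U (ψ a) * (d : ℤ_[p]) = U (ψ b) * d := by rw [← hzint, ← hzint, hzeq]
        have hd0 : (d : ℤ_[p]) ≠ 0 := Nat.cast_ne_zero.2 hdpos.ne'
        exact mul_right_cancel₀ hd0 h1
      set N := ψ a with hN
      set T := ψ b - ψ a with hT
      have hTpos : 0 < T := by have := hψmono hab; omega
      have hUNT : g^[N + T] u = g^[N] u := by
        show U (N + T) = U N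
        rw [show N + T = ψ b by omega]
        exact hUeq.symm
      have hshift : ∀ t, U (N + t + T) = U (N + t) := by
        intro t
        show g^[N + t + T] u = g^[N + t] u
        rw [show N + t + T = t + (N + T) by omega, show N + t = t + N by omega,
          Function.iterate_add_apply g t (N + T) u, Function.iterate_add_apply g t N u, hUNT]
      have hper : ∀ t, e (N + t + T) = e (N + t) := by
        intro t
        show eps0 (-((q : ℤ_[p]) * U (N + t + T))) = eps0 (-((q : ℤ_[p]) * U (N + t)))
        rw [hshift t]
      have hp1 : (1 : ℝ) < p := by exact_mod_cast hp.one_lt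
      have hsumZ : Summable (fun n => (e n : ℤ_[p]) * (p : ℤ_[p]) ^ n) := by
        refine Summable.of_norm_bounded (g := fun n => ((p : ℝ))⁻¹ ^ n)
          (summable_geometric_of_lt_one (by positivity) ?_) ?_
        · rw [inv_lt_one_iff₀]; right; exact hp1
        · intro n
          calc ‖(e n : ℤ_[p]) * (p : ℤ_[p]) ^ n‖ ≤ 1 * ‖(p : ℤ_[p]) ^ n‖ := by
                rw [norm_mul]
                exact mul_le_mul_of_nonneg_right (PadicInt.norm_le_one _) (norm_nonneg _)
            _ = ((p : ℝ))⁻¹ ^ n := by rw [one_mul, norm_pow, PadicInt.norm_p]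
      have hiso : Isometry ((↑) : ℤ_[p] → ℚ_[p]) := fun x y => rfl
      have hmap : ((phi p q g u : ℤ_[p]) : ℚ_[p]) = ∑' n, ((e n : ℚ_[p]) * (p : ℚ_[p]) ^ n) := by
        have hphi : phi p q g u = ∑' n, ((e n : ℤ_[p]) * (p : ℤ_[p]) ^ n) := rfl
        have h1 : HasSum (fun n => (e n : ℤ_[p]) * (p : ℤ_[p]) ^ n) (phi p q g u) := by
          rw [hphi]
          exact hsumZ.hasSum
        have h2 := h1.map (PadicInt.Coe.ringHom (p := p)).toAddMonoidHom hiso.continuous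
        have h3 := h2.tsum_eq
        rw [show ((phi p q g u : ℤ_[p]) : ℚ_[p])
          = PadicInt.Coe.ringHom.toAddMonoidHom (phi p q g u) from rfl, ← h3]
        apply tsum_congr
        intro n
        show (((e n : ℤ_[p]) * (p : ℤ_[p]) ^ n : ℤ_[p]) : ℚ_[p]) = _
        push_cast
        rfl
      obtain ⟨r, hr⟩ := aux_periodic_tsum_rat p e N T hTpos hper
      exact hirr ⟨r, (hmap.trans hr).symm⟩
    rcases hne.lt_or_gt with h | h
    · exact hkey m1 m2 h heqz
    · exact hkey m2 m1 h heqz.symm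
  -- the real coefficient sequence
  set c : ℕ → ℝ := fun n => (p : ℝ) ^ ψ (n + 1) * ((v (ψ (n + 1)) : ℚ) : ℝ) with hc
  have hvz : ∀ i, ((v i : ℚ) : ℝ) = (z i : ℝ) / d := by
    intro i
    have := hzs i
    have h1 : ((v i : ℚ) : ℝ) * d = (z i : ℝ) := by exact_mod_cast congrArg (fun r : ℚ => (r : ℝ)) this
    field_simp [← h1]
    exact_mod_cast h1
  set aB : ℕ → ℝ := fun m => ((B (ψ m) : ℤ) : ℝ) with haB
  have haBne : ∀ m, aB m ≠ 0 := by
    intro m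
    simp only [haB, hB]
    push_cast
    refine mul_ne_zero ?_ (by positivity)
    exact_mod_cast hzne (ψ m)
  have hcval : ∀ n, c n = aB (n + 1) / d := by
    intro n
    simp only [hc, haB, hB, hvz]
    push_cast
    ring
  have hc_ne : ∀ n, c n ≠ 0 := by
    intro n
    rw [hcval]
    exact div_ne_zero (haBne (n + 1)) (by positivity)
  -- ratio convergence
  have hratio : Tendsto (fun m => |aB (m + 1)| / |aB m|) atTop (𝓝 (q : ℝ)) := by
    set X : ℕ → ℝ := fun m => ((z (ψ m)).natAbs : ℝ) with hXdef
    have hX1 : ∀ m, 1 ≤ X m := by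
      intro m
      have h1 : 1 ≤ (z (ψ m)).natAbs := Nat.one_le_iff_ne_zero.2 (Int.natAbs_ne_zero.2 (hzne _))
      simp only [hXdef]
      exact_mod_cast h1
    have hXpos : ∀ m, 0 < X m := fun m => lt_of_lt_of_le zero_lt_one (hX1 m)
    have habs : ∀ m, |aB m| = X m * (p : ℝ) ^ (ψ m) := by
      intro m
      simp only [haB, hB]
      push_cast
      rw [abs_mul, abs_pow, abs_of_nonneg (show (0:ℝ) ≤ (p : ℝ) by positivity)]
      congr 1
      simp only [hXdef]
      rw [Nat.cast_natAbs, Int.cast_abs]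
    have hdiff : ∀ m, |aB (m + 1) - q * aB m| ≤ (p : ℝ) * d * (p : ℝ) ^ (ψ m) := by
      intro m
      have h2 := congrArg (fun t : ℤ => (t : ℝ)) (hArec m)
      push_cast at h2
      have h1 : aB (m + 1) - q * aB m = ((e (ψ m) : ℝ)) * d * (p : ℝ) ^ (ψ m) := by
        simp only [haB]
        rw [h2]
        ring
      rw [h1, abs_of_nonneg (by positivity : (0:ℝ) ≤ (e (ψ m) : ℝ) * d * (p : ℝ) ^ (ψ m))]
      have he' : (e (ψ m) : ℝ) ≤ (p : ℝ) := by exact_mod_cast (he_lt (ψ m)).le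
      gcongr
    have hbound : ∀ m, |(|aB (m + 1)| / |aB m|) - q| ≤ ((p : ℝ) * d) / X m := by
      intro m
      have hApos : 0 < |aB m| := abs_pos.2 (haBne m)
      have h1 : |aB (m + 1)| / |aB m| - q = (|aB (m + 1)| - q * |aB m|) / |aB m| := by
        field_simp
      rw [h1, abs_div, abs_abs]
      have h2 : |(|aB (m + 1)| - q * |aB m|)| ≤ |aB (m + 1) - q * aB m| := by
        have hqa : (q : ℝ) * |aB m| = |(q : ℝ) * aB m| := by
          rw [abs_mul, abs_of_nonneg (by positivity : (0:ℝ) ≤ (q : ℝ))]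
        rw [hqa]
        exact abs_abs_sub_abs_le_abs_sub _ _
      calc |(|aB (m + 1)| - q * |aB m|)| / |aB m| ≤ |aB (m + 1) - q * aB m| / |aB m| := by
            gcongr
        _ ≤ ((p : ℝ) * d * (p : ℝ) ^ (ψ m)) / (X m * (p : ℝ) ^ (ψ m)) := by
            rw [habs m] at hApos ⊢
            gcongr
            exact hdiff m
        _ = ((p : ℝ) * d) / X m := by
            rw [mul_div_mul_right _ _ (by positivity : ((p : ℝ) ^ (ψ m)) ≠ 0)]
    have h0 : Tendsto (fun m => ((p : ℝ) * d) / X m) atTop (𝓝 0) := by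
      apply Tendsto.div_atTop tendsto_const_nhds
      exact tendsto_natCast_atTop_atTop.comp hXtop
    have habsconv : Tendsto (fun m => |(|aB (m + 1)| / |aB m|) - (q : ℝ)|) atTop (𝓝 0) :=
      squeeze_zero (fun m => abs_nonneg _) hbound h0
    rw [tendsto_iff_dist_tendsto_zero]
    simpa [Real.dist_eq] using habsconv
  have hcr : Tendsto (fun n => ‖c (n + 1)‖ / ‖c n‖) atTop (𝓝 (q : ℝ)) := by
    have hcomp := hratio.comp (tendsto_add_atTop_nat 1)
    refine hcomp.congr fun n => ?_
    simp only [Function.comp_apply, Real.norm_eq_abs, hcval]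
    rw [abs_div, abs_div]
    rw [abs_of_nonneg (by positivity : (0:ℝ) ≤ (d:ℝ))]
    have h1 : |aB (n + 1)| ≠ 0 := abs_ne_zero.2 (haBne _)
    have h2 : (d : ℝ) ≠ 0 := by positivity
    field_simp
  have hqR : (0 : ℝ) < q := by exact_mod_cast hq
  constructor
  · have hroot := aux_ratio_root hqR hc_ne hcr
    have heq : (fun n : ℕ => ((p : ℝ) ^ ψ (n + 1) * |((v (ψ (n + 1)) : ℚ) : ℝ)|) ^ ((n : ℝ)⁻¹))
        = fun n : ℕ => |c n| ^ ((n : ℝ)⁻¹) := by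
      funext n
      congr 1
      rw [hc]
      rw [abs_mul, abs_of_nonneg (by positivity : (0:ℝ) ≤ (p : ℝ) ^ ψ (n + 1))]
    rw [heq]
    exact hroot.limsup_eq
  · have hqnn : ((q : NNReal)) ≠ 0 := by exact_mod_cast hq.ne'
    have hcr' : Tendsto (fun n => ‖c n.succ‖ / ‖c n‖) atTop (𝓝 ((q : NNReal) : ℝ)) := by
      simpa using hcr
    have := FormalMultilinearSeries.ofScalars_radius_eq_inv_of_tendsto ℝ c hqnn hcr'
    rw [hc] at this
    rw [this]
    rw [ENNReal.coe_inv hqnn, ENNReal.coe_natCast]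
end

section
/- The map φ is a bijection of 𝔽_q[[T]] onto itself, and it is an isometry for the T-adic metric: for all f, h ∈ 𝔽_q[[T]], the order of vanishing of φ(f) − φ(h) equals the order of vanishing of f − h (as elements of ℕ ∪ {∞}). -/
open PowerSeries
open scoped Classical

/-- `φ(f) = Σ (Sⁿf)(0) Tⁿ`, for a given iteration map `S` on formal power series. -/
noncomputable def phiF {F : Type*} [Field F] (S : PowerSeries F → PowerSeries F)
    (f : PowerSeries F) : PowerSeries F :=
  PowerSeries.mk fun n => PowerSeries.constantCoeff (S^[n] f)

section Aux

variable {F : Type*} [Field F] (S : PowerSeries F → PowerSeries F)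
  (hS : ∀ f : PowerSeries F, PowerSeries.X * S f =
      if PowerSeries.constantCoeff f = 0 then f
      else (1 + PowerSeries.X) * f - PowerSeries.C (PowerSeries.constantCoeff f))

include hS in
/-- coefficient formula for `S`. -/
lemma coeffS (f : PowerSeries F) (k : ℕ) :
    coeff k (S f) = coeff (k+1) f +
      (if constantCoeff f = 0 then 0 else coeff k f) := by
  have h := congrArg (coeff (k+1)) (hS f)
  rw [coeff_succ_X_mul] at h
  split_ifs with h0
  · rw [h, if_pos h0, add_zero]
  · rw [h, if_neg h0]
    simp [add_mul, coeff_C]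

lemma phi_zero (f : PowerSeries F) : coeff 0 (phiF S f) = constantCoeff f := by
  simp [phiF]

lemma phi_succ (f : PowerSeries F) (k : ℕ) :
    coeff (k+1) (phiF S f) = coeff k (phiF S (S f)) := by
  simp [phiF, Function.iterate_succ_apply]

/-- equality of coefficients below `n`. -/
def Eq_ (n : ℕ) (f h : PowerSeries F) : Prop := ∀ k < n, coeff k f = coeff k h

lemma E_const {n : ℕ} {f h : PowerSeries F} (hE : Eq_ (n+1) f h) :
    constantCoeff f = constantCoeff h := by
  have := hE 0 (Nat.succ_pos n)
  simpa [coeff_zero_eq_constantCoeff] using this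

include hS in
lemma E_S {n : ℕ} {f h : PowerSeries F} (hE : Eq_ (n+1) f h) : Eq_ n (S f) (S h) := by
  intro k hk
  rw [coeffS S hS, coeffS S hS, E_const hE, hE (k+1) (by omega), hE k (by omega)]

include hS in
lemma E_phi_fwd : ∀ (n : ℕ) (f h : PowerSeries F), Eq_ n f h → Eq_ n (phiF S f) (phiF S h) := by
  intro n
  induction n with
  | zero => intro f h _ k hk; omega
  | succ n ih =>
    intro f h hE k hk
    match k with
    | 0 => rw [phi_zero, phi_zero, E_const hE]
    | k+1 =>
      rw [phi_succ, phi_succ]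
      exact ih (S f) (S h) (E_S S hS hE) k (by omega)

include hS in
lemma E_of_E_S {n : ℕ} {f h : PowerSeries F}
    (h0 : constantCoeff f = constantCoeff h)
    (hE : Eq_ n (S f) (S h)) : Eq_ (n+1) f h := by
  intro k
  induction k with
  | zero =>
    intro _
    simpa [coeff_zero_eq_constantCoeff] using h0
  | succ k ih =>
    intro hk
    have hk' : k < n := by omega
    have h1 := coeffS S hS f k
    have h2 := coeffS S hS h k
    have h3 : coeff k (S f) = coeff k (S h) := hE k hk'
    rw [h0] at h1
    rw [ih (by omega)] at h1
    have : coeff (k+1) f + (if constantCoeff h = 0 then 0 else coeff k h)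
        = coeff (k+1) h + (if constantCoeff h = 0 then 0 else coeff k h) := by
      rw [← h1, ← h2, h3]
    exact add_right_cancel this

include hS in
lemma E_phi_bwd : ∀ (n : ℕ) (f h : PowerSeries F),
    Eq_ n (phiF S f) (phiF S h) → Eq_ n f h := by
  intro n
  induction n with
  | zero => intro f h _ k hk; omega
  | succ n ih =>
    intro f h hE
    have h0 : constantCoeff f = constantCoeff h := by
      have := hE 0 (Nat.succ_pos n)
      rwa [phi_zero, phi_zero] at this
    have hshift : Eq_ n (phiF S (S f)) (phiF S (S h)) := by
      intro k hk
      rw [← phi_succ, ← phi_succ]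
      exact hE (k+1) (by omega)
    exact E_of_E_S S hS h0 (ih (S f) (S h) hshift)

lemma order_ge_iff (a : PowerSeries F) (n : ℕ) :
    (↑n : ℕ∞) ≤ a.order ↔ ∀ k < n, coeff k a = 0 := by
  constructor
  · intro hle k hk
    exact coeff_of_lt_order k (lt_of_lt_of_le (by exact_mod_cast hk) hle)
  · intro h
    exact nat_le_order a n h

lemma E_iff_order (f h : PowerSeries F) (n : ℕ) :
    Eq_ n f h ↔ (↑n : ℕ∞) ≤ (f - h).order := by
  rw [order_ge_iff]
  constructor
  · intro hE k hk; rw [map_sub, hE k hk, sub_self]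
  · intro hE k hk
    have := hE k hk
    rw [map_sub, sub_eq_zero] at this
    exact this

end Aux

/-- The map `φ` is a bijective isometry of `𝔽_q[[T]]` for the `T`-adic metric:
`ord(φ(f) − φ(h)) = ord(f − h)`. Here `S` is characterized by
`T·S(f) = f` if `f(0) = 0` and `T·S(f) = (1+T)f − f(0)` otherwise. -/
theorem stmt18 {F : Type*} [Field F] [Fintype F]
    (S : PowerSeries F → PowerSeries F)
    (hS : ∀ f : PowerSeries F, PowerSeries.X * S f =
      if PowerSeries.constantCoeff f = 0 then f
      else (1 + PowerSeries.X) * f - PowerSeries.C (PowerSeries.constantCoeff f)) :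
    Function.Bijective (phiF S) ∧
      ∀ f h : PowerSeries F, (phiF S f - phiF S h).order = (f - h).order := by
  have key : ∀ (n : ℕ) (f h : PowerSeries F), Eq_ n f h ↔ Eq_ n (phiF S f) (phiF S h) :=
    fun n f h => ⟨E_phi_fwd S hS n f h, E_phi_bwd S hS n f h⟩
  have keyord : ∀ (n : ℕ) (f h : PowerSeries F),
      (↑n : ℕ∞) ≤ (f - h).order ↔ (↑n : ℕ∞) ≤ (phiF S f - phiF S h).order := by
    intro n f h
    rw [← E_iff_order, ← E_iff_order]
    exact key n f h
  have ord : ∀ f h : PowerSeries F, (phiF S f - phiF S h).order = (f - h).order := by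
    intro f h
    have aux : ∀ a b : ℕ∞, (∀ n : ℕ, (↑n : ℕ∞) ≤ a ↔ (↑n : ℕ∞) ≤ b) → a = b := by
      intro a b hab
      cases a with
      | top =>
        cases b with
        | top => rfl
        | coe m =>
          have := (hab (m+1)).mp le_top
          exfalso
          exact absurd this (by exact_mod_cast Nat.not_succ_le_self m)
      | coe n =>
        cases b with
        | top =>
          have := (hab (n+1)).mpr le_top
          exfalso
          exact absurd this (by exact_mod_cast Nat.not_succ_le_self n)
        | coe m =>
          have h1 := (hab n).mp le_rfl
          have h2 := (hab m).mpr le_rfl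
          exact le_antisymm (by exact_mod_cast h1) (by exact_mod_cast h2)
    exact aux _ _ (fun n => (keyord n f h).symm)
  have inj : Function.Injective (phiF S) := by
    intro f h hfh
    ext k
    exact E_phi_bwd S hS (k+1) f h (by rw [hfh]; intro j _; rfl) k (by omega)
  have surj : Function.Surjective (phiF S) := by
    intro g
    -- finite truncation maps
    set lift : ∀ n : ℕ, (Fin n → F) → PowerSeries F :=
      fun n v => PowerSeries.mk (fun k => if hk : k < n then v ⟨k, hk⟩ else 0) with hlift
    have hP : ∀ n : ℕ, ∃ f : PowerSeries F, ∀ k < n, coeff k (phiF S f) = coeff k g := by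
      intro n
      set bar : (Fin n → F) → (Fin n → F) :=
        fun v k => coeff k (phiF S (lift n v)) with hbar
      have barinj : Function.Injective bar := by
        intro v w hvw
        have hE : Eq_ n (phiF S (lift n v)) (phiF S (lift n w)) := by
          intro k hk
          exact congrFun hvw ⟨k, hk⟩
        have hE2 := E_phi_bwd S hS n _ _ hE
        funext k
        have := hE2 k k.isLt
        simpa [hlift, k.isLt] using this
      have barsurj : Function.Surjective bar := Finite.surjective_of_injective barinj
      obtain ⟨v, hv⟩ := barsurj (fun k => coeff k g)
      exact ⟨lift n v, fun k hk => congrFun hv ⟨k, hk⟩⟩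
    set fn : ℕ → PowerSeries F := fun n => (hP n).choose with hfn
    have hfnspec : ∀ n, ∀ k < n, coeff k (phiF S (fn n)) = coeff k g :=
      fun n => (hP n).choose_spec
    set f0 : PowerSeries F := PowerSeries.mk (fun k => coeff k (fn (k+1))) with hf0
    have claim1 : ∀ n k, k < n → coeff k f0 = coeff k (fn n) := by
      intro n k hk
      have hE : Eq_ (k+1) (phiF S (fn (k+1))) (phiF S (fn n)) := by
        intro j hj
        rw [hfnspec (k+1) j hj, hfnspec n j (by omega)]
      have := E_phi_bwd S hS (k+1) _ _ hE k (by omega)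
      simpa [hf0] using this
    refine ⟨f0, ?_⟩
    ext k
    have hE : Eq_ (k+1) f0 (fn (k+1)) := fun j hj => claim1 (k+1) j hj
    have := E_phi_fwd S hS (k+1) _ _ hE k (by omega)
    rw [this, hfnspec (k+1) k (by omega)]
  exact ⟨⟨inj, surj⟩, ord⟩
end

section
/- For every f ∈ 𝔽_q[[T]], f is a rational power series (i.e. there exist polynomials P, Q ∈ 𝔽_q[T] with Q ≠ 0 and Q·f = P in 𝔽_q[[T]]) if and only if the sequence (S^n(f))_{n∈ℕ} is ultimately periodic, i.e. there exist n₀ ∈ ℕ and k ≥ 1 with S^{n₀+k}(f) = S^{n₀}(f). -/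
open scoped Classical

section Aux

variable {F : Type*} [Field F]

private lemma coeff_zero_coe (p : Polynomial F) :
    PowerSeries.constantCoeff (p : PowerSeries F) = p.coeff 0 := by
  rw [← PowerSeries.coeff_zero_eq_constantCoeff_apply, Polynomial.coeff_coe]

/-- If `S g` is rational then `g` is rational. -/
private lemma step_back (S : PowerSeries F → PowerSeries F)
    (hS : ∀ f : PowerSeries F, PowerSeries.X * S f =
      if PowerSeries.constantCoeff f = 0 then f
      else (1 + PowerSeries.X) * f - PowerSeries.C (PowerSeries.constantCoeff f))
    (g : PowerSeries F)
    (h : ∃ P Q : Polynomial F, Q ≠ 0 ∧ (Q : PowerSeries F) * S g = (P : PowerSeries F)) :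
    ∃ P Q : Polynomial F, Q ≠ 0 ∧ (Q : PowerSeries F) * g = (P : PowerSeries F) := by
  obtain ⟨P, Q, hQ, hPQ⟩ := h
  have key := hS g
  by_cases hc : PowerSeries.constantCoeff g = 0
  · rw [if_pos hc] at key
    refine ⟨Polynomial.X * P, Q, hQ, ?_⟩
    push_cast
    linear_combination PowerSeries.X * hPQ - (Q : PowerSeries F) * key
  · rw [if_neg hc] at key
    set c := PowerSeries.constantCoeff g with hc'
    refine ⟨Polynomial.X * P + Polynomial.C c * Q, (1 + Polynomial.X) * Q, ?_, ?_⟩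
    · intro h0
      apply hQ
      rcases mul_eq_zero.mp h0 with h1 | h1
      · exfalso
        have := congrArg (fun p => Polynomial.coeff p 0) h1
        simp at this
      · exact h1
    · push_cast
      have : PowerSeries.X * ((Q : PowerSeries F) * S g)
          = (1 + PowerSeries.X) * (Q : PowerSeries F) * g
            - PowerSeries.C c * (Q : PowerSeries F) := by
        calc PowerSeries.X * ((Q : PowerSeries F) * S g)
            = (Q : PowerSeries F) * (PowerSeries.X * S g) := by ring
          _ = (Q : PowerSeries F) * ((1 + PowerSeries.X) * g - PowerSeries.C c) := by rw [key]
          _ = (1 + PowerSeries.X) * (Q : PowerSeries F) * g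
              - PowerSeries.C c * (Q : PowerSeries F) := by ring
      rw [hPQ] at this
      linear_combination -this

/-- The chain relation: `q·g = Xⁿ·Sⁿg + r` with `q(0) = 1`. -/
private lemma chain (S : PowerSeries F → PowerSeries F)
    (hS : ∀ f : PowerSeries F, PowerSeries.X * S f =
      if PowerSeries.constantCoeff f = 0 then f
      else (1 + PowerSeries.X) * f - PowerSeries.C (PowerSeries.constantCoeff f))
    (g : PowerSeries F) (n : ℕ) :
    ∃ q r : Polynomial F, q.coeff 0 = 1 ∧
      (q : PowerSeries F) * g = PowerSeries.X ^ n * S^[n] g + (r : PowerSeries F) := by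
  induction n with
  | zero => exact ⟨1, 0, by simp, by simp⟩
  | succ n ih =>
    obtain ⟨q, r, hq0, hqr⟩ := ih
    set h := S^[n] g with hh
    have key := hS h
    have hiter : S^[n+1] g = S h := by rw [hh, Function.iterate_succ_apply']
    by_cases hc : PowerSeries.constantCoeff h = 0
    · rw [if_pos hc] at key
      refine ⟨q, r, hq0, ?_⟩
      rw [hiter]
      linear_combination hqr - PowerSeries.X ^ n * key
    · rw [if_neg hc] at key
      set c := PowerSeries.constantCoeff h with hc'
      refine ⟨(1 + Polynomial.X) * q, Polynomial.X ^ n * Polynomial.C c + (1 + Polynomial.X) * r,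
        ?_, ?_⟩
      · simp [Polynomial.mul_coeff_zero, hq0]
      · push_cast
        rw [hiter]
        have hh1 : (1 + PowerSeries.X) * h = PowerSeries.X * S h + PowerSeries.C c := by
          linear_combination -key
        calc (1 + PowerSeries.X) * (q : PowerSeries F) * g
            = (1 + PowerSeries.X) * ((q : PowerSeries F) * g) := by ring
          _ = (1 + PowerSeries.X) * (PowerSeries.X ^ n * h + (r : PowerSeries F)) := by rw [hqr]
          _ = PowerSeries.X ^ n * ((1 + PowerSeries.X) * h)
              + (1 + PowerSeries.X) * (r : PowerSeries F) := by ring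
          _ = PowerSeries.X ^ n * (PowerSeries.X * S h + PowerSeries.C c)
              + (1 + PowerSeries.X) * (r : PowerSeries F) := by rw [hh1]
          _ = PowerSeries.X ^ (n + 1) * S h
              + (PowerSeries.X ^ n * PowerSeries.C c
                + (1 + PowerSeries.X) * (r : PowerSeries F)) := by ring

/-- A periodic point of `S` is rational. -/
private lemma periodic_rational (S : PowerSeries F → PowerSeries F)
    (hS : ∀ f : PowerSeries F, PowerSeries.X * S f =
      if PowerSeries.constantCoeff f = 0 then f
      else (1 + PowerSeries.X) * f - PowerSeries.C (PowerSeries.constantCoeff f))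
    (g : PowerSeries F) (k : ℕ) (hk : 1 ≤ k) (hper : S^[k] g = g) :
    ∃ P Q : Polynomial F, Q ≠ 0 ∧ (Q : PowerSeries F) * g = (P : PowerSeries F) := by
  obtain ⟨q, r, hq0, hqr⟩ := chain S hS g k
  rw [hper] at hqr
  refine ⟨r, q - Polynomial.X ^ k, ?_, ?_⟩
  · intro h0
    have h00 : (q - Polynomial.X ^ k).coeff 0 = 1 := by
      rw [Polynomial.coeff_sub, hq0, Polynomial.coeff_X_pow,
        if_neg (by omega : ¬ (0 = k)), sub_zero]
    rw [h0] at h00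
    simp at h00
  · push_cast
    linear_combination hqr

/-- One forward step keeps the same denominator and bounded numerator degree. -/
private lemma step_fwd (S : PowerSeries F → PowerSeries F)
    (hS : ∀ f : PowerSeries F, PowerSeries.X * S f =
      if PowerSeries.constantCoeff f = 0 then f
      else (1 + PowerSeries.X) * f - PowerSeries.C (PowerSeries.constantCoeff f))
    (Q : Polynomial F) (h : PowerSeries F) (Pn : Polynomial F) (D : ℕ)
    (hPD : Pn.natDegree ≤ D) (hQD : Q.natDegree ≤ D)
    (hPn : (Q : PowerSeries F) * h = (Pn : PowerSeries F)) :
    ∃ P' : Polynomial F, P'.natDegree ≤ D ∧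
      (Q : PowerSeries F) * S h = (P' : PowerSeries F) := by
  have key := hS h
  by_cases hc : PowerSeries.constantCoeff h = 0
  · rw [if_pos hc] at key
    have hPn0 : Pn.coeff 0 = 0 := by
      have := congrArg (PowerSeries.constantCoeff) hPn
      rw [map_mul, hc, mul_zero, coeff_zero_coe] at this
      exact this.symm
    obtain ⟨P', hP'⟩ := Polynomial.X_dvd_iff.mpr hPn0
    refine ⟨P', ?_, ?_⟩
    · rcases eq_or_ne P' 0 with h0 | h0
      · simp [h0]
      · calc P'.natDegree ≤ (Polynomial.X * P').natDegree := by
              rw [Polynomial.natDegree_mul Polynomial.X_ne_zero h0, Polynomial.natDegree_X]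
              omega
          _ = Pn.natDegree := by rw [← hP']
          _ ≤ D := hPD
    · have hX : (PowerSeries.X : PowerSeries F) ≠ 0 := PowerSeries.X_ne_zero
      apply mul_left_cancel₀ hX
      calc PowerSeries.X * ((Q : PowerSeries F) * S h)
          = (Q : PowerSeries F) * (PowerSeries.X * S h) := by ring
        _ = (Pn : PowerSeries F) := by rw [key, hPn]
        _ = ((Polynomial.X * P' : Polynomial F) : PowerSeries F) := by rw [← hP']
        _ = PowerSeries.X * (P' : PowerSeries F) := by push_cast; ring
  · rw [if_neg hc] at key
    set c := PowerSeries.constantCoeff h with hc'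
    set R : Polynomial F := (1 + Polynomial.X) * Pn - Polynomial.C c * Q with hR
    have hR0 : R.coeff 0 = 0 := by
      have hPn0 : Pn.coeff 0 = Q.coeff 0 * c := by
        have := congrArg (PowerSeries.constantCoeff) hPn
        rw [map_mul, coeff_zero_coe, coeff_zero_coe, ← hc'] at this
        exact this.symm
      simp [hR, Polynomial.mul_coeff_zero, Polynomial.coeff_sub, hPn0]
      ring
    obtain ⟨R', hR'⟩ := Polynomial.X_dvd_iff.mpr hR0
    have hrel : PowerSeries.X * ((Q : PowerSeries F) * S h)
        = PowerSeries.X * (R' : PowerSeries F) := by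
      calc PowerSeries.X * ((Q : PowerSeries F) * S h)
          = (Q : PowerSeries F) * (PowerSeries.X * S h) := by ring
        _ = (Q : PowerSeries F) * ((1 + PowerSeries.X) * h - PowerSeries.C c) := by rw [key]
        _ = (1 + PowerSeries.X) * ((Q : PowerSeries F) * h)
            - PowerSeries.C c * (Q : PowerSeries F) := by ring
        _ = (1 + PowerSeries.X) * (Pn : PowerSeries F)
            - PowerSeries.C c * (Q : PowerSeries F) := by rw [hPn]
        _ = (R : PowerSeries F) := by rw [hR]; push_cast; ring
        _ = ((Polynomial.X * R' : Polynomial F) : PowerSeries F) := by rw [← hR']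
        _ = PowerSeries.X * (R' : PowerSeries F) := by push_cast; ring
    refine ⟨R', ?_, mul_left_cancel₀ PowerSeries.X_ne_zero hrel⟩
    rcases eq_or_ne R' 0 with h0 | h0
    · simp [h0]
    · have hRdeg : R.natDegree ≤ D + 1 := by
        calc R.natDegree ≤ max ((1 + Polynomial.X) * Pn).natDegree
              (Polynomial.C c * Q).natDegree := Polynomial.natDegree_sub_le _ _
          _ ≤ D + 1 := by
            apply max_le
            · calc ((1 + Polynomial.X) * Pn).natDegree
                  ≤ (1 + Polynomial.X).natDegree + Pn.natDegree :=
                    Polynomial.natDegree_mul_le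
                _ ≤ 1 + D := by
                    have : (1 + Polynomial.X : Polynomial F).natDegree ≤ 1 := by
                      apply Polynomial.natDegree_add_le_of_degree_le <;> simp
                    omega
                _ = D + 1 := by ring
            · calc (Polynomial.C c * Q).natDegree ≤ (Polynomial.C c).natDegree + Q.natDegree :=
                  Polynomial.natDegree_mul_le
                _ ≤ D := by simp; omega
                _ ≤ D + 1 := by omega
      have : R.natDegree = 1 + R'.natDegree := by
        rw [hR', Polynomial.natDegree_mul Polynomial.X_ne_zero h0, Polynomial.natDegree_X]
      omega

end Aux

/-- A formal power series `f ∈ 𝔽_q[[T]]` is rational iff the sequence of iterates `(Sⁿf)`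
is ultimately periodic, where `S` is characterized by `T·S(f) = f` if `f(0) = 0` and
`T·S(f) = (1+T)f − f(0)` otherwise. -/
theorem stmt19 {F : Type*} [Field F] [Fintype F]
    (S : PowerSeries F → PowerSeries F)
    (hS : ∀ f : PowerSeries F, PowerSeries.X * S f =
      if PowerSeries.constantCoeff f = 0 then f
      else (1 + PowerSeries.X) * f - PowerSeries.C (PowerSeries.constantCoeff f))
    (f : PowerSeries F) :
    (∃ P Q : Polynomial F, Q ≠ 0 ∧ (Q : PowerSeries F) * f = (P : PowerSeries F)) ↔
      ∃ n₀ : ℕ, ∃ k ≥ 1, S^[n₀ + k] f = S^[n₀] f := by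
  constructor
  · rintro ⟨P, Q, hQ, hPQ⟩
    set D := max P.natDegree Q.natDegree with hD
    -- every iterate satisfies a relation with the same denominator
    have main : ∀ n : ℕ, ∃ Pn : Polynomial F, Pn.natDegree ≤ D ∧
        (Q : PowerSeries F) * S^[n] f = (Pn : PowerSeries F) := by
      intro n
      induction n with
      | zero => exact ⟨P, le_max_left _ _, by simpa using hPQ⟩
      | succ n ih =>
        obtain ⟨Pn, hPn1, hPn2⟩ := ih
        obtain ⟨P', hP'1, hP'2⟩ := step_fwd S hS Q (S^[n] f) Pn D hPn1 (le_max_right _ _) hPn2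
        exact ⟨P', hP'1, by rwa [Function.iterate_succ_apply']⟩
    -- pigeonhole
    have hQne : (Q : PowerSeries F) ≠ 0 := by
      simpa [Polynomial.coe_eq_zero_iff] using hQ
    let φ : ℕ → (Fin (D + 1) → F) := fun n i =>
      PowerSeries.coeff i ((Q : PowerSeries F) * S^[n] f)
    obtain ⟨a, b, hab, hφ⟩ := Finite.exists_ne_map_eq_of_infinite φ
    wlog hlt : a < b generalizing a b
    · exact this b a hab.symm hφ.symm (by omega)
    have heq : S^[a] f = S^[b] f := by
      apply mul_left_cancel₀ hQne
      obtain ⟨Pa, hPa1, hPa2⟩ := main a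
      obtain ⟨Pb, hPb1, hPb2⟩ := main b
      ext i
      rcases le_or_gt i D with hi | hi
      · have := congrFun hφ ⟨i, by omega⟩
        simpa [φ] using this
      · rw [hPa2, hPb2, Polynomial.coeff_coe, Polynomial.coeff_coe,
          Polynomial.coeff_eq_zero_of_natDegree_lt (by omega),
          Polynomial.coeff_eq_zero_of_natDegree_lt (by omega)]
    refine ⟨a, b - a, by omega, ?_⟩
    rw [(by omega : a + (b - a) = b), ← heq]
  · rintro ⟨n₀, k, hk, hper⟩
    -- S^[n₀] f is a periodic point of S
    have hper' : S^[k] (S^[n₀] f) = S^[n₀] f := by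
      rw [← Function.iterate_add_apply, Nat.add_comm k n₀]
      rw [Nat.add_comm n₀ k] at hper
      rwa [Nat.add_comm k n₀] at hper
    have hrat : ∃ P Q : Polynomial F, Q ≠ 0 ∧
        (Q : PowerSeries F) * S^[n₀] f = (P : PowerSeries F) :=
      periodic_rational S hS _ k hk hper'
    clear hper hper'
    induction n₀ with
    | zero => simpa using hrat
    | succ n ih =>
      apply ih
      rw [Function.iterate_succ_apply'] at hrat
      exact step_back S hS _ hrat
end
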